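/- arXiv:1004.1430 — 2 statements merged into one kernel-verified Lean document; each statement's English description precedes it below -/
import Mathlib

section
/- Let k be a positive integer and (x,y) a vertex of the hexagonal grid with x+y odd. Then there exist paths of length exactly 2k+1 from (x,y) to every vertex in {(x−k+2j, y−k−1) : j=0,…,k} and to every vertex in {(x−k−1+2j, y+k) : j=0,…,k+1}. -/
/-- The hexagonal grid in its brick wall representation: vertex set ℤ×ℤ,
with (x,y) adjacent to (x±1,y) always, and to (x,y+1) if x+y is even
(equivalently, to (x,y-1) if x+y is odd). -/
def hexGraph : SimpleGraph (ℤ × ℤ) where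
  Adj u v := (u.2 = v.2 ∧ (u.1 = v.1 + 1 ∨ v.1 = u.1 + 1)) ∨
    (u.1 = v.1 ∧ ((v.2 = u.2 + 1 ∧ Even (u.1 + u.2)) ∨ (u.2 = v.2 + 1 ∧ Even (v.1 + v.2))))
  symm := by
    constructor
    rintro u v (⟨h1, h2 | h2⟩ | ⟨h1, ⟨h2, h3⟩ | ⟨h2, h3⟩⟩)
    · exact Or.inl ⟨h1.symm, Or.inr h2⟩
    · exact Or.inl ⟨h1.symm, Or.inl h2⟩
    · exact Or.inr ⟨h1.symm, Or.inr ⟨h2, h3⟩⟩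
    · exact Or.inr ⟨h1.symm, Or.inl ⟨h2, h3⟩⟩
  loopless := ⟨by rintro ⟨x, y⟩ (⟨_, h | h⟩ | ⟨_, ⟨h, _⟩ | ⟨h, _⟩⟩) <;> omega⟩

/-- The graph distance from a vertex to the horizontal line L_k = {(x,k) : x ∈ ℤ}. -/
noncomputable def hexLineDist (u : ℤ × ℤ) (k : ℤ) : ℕ :=
  sInf {n : ℕ | ∃ x : ℤ, hexGraph.dist u (x, k) = n}


open SimpleGraph

lemma hex_adj_right (x y : ℤ) : hexGraph.Adj (x, y) (x + 1, y) :=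
  Or.inl ⟨rfl, Or.inr rfl⟩

lemma hex_adj_left (x y : ℤ) : hexGraph.Adj (x, y) (x - 1, y) :=
  Or.inl ⟨rfl, Or.inl (by ring)⟩

lemma hex_adj_down (x y : ℤ) (h : Odd (x + y)) : hexGraph.Adj (x, y) (x, y - 1) :=
  Or.inr ⟨rfl, Or.inr ⟨by ring, by rcases h with ⟨m, hm⟩; exact ⟨m, by omega⟩⟩⟩

lemma hex_adj_up (x y : ℤ) (h : Even (x + y)) : hexGraph.Adj (x, y) (x, y + 1) :=
  Or.inr ⟨rfl, Or.inl ⟨rfl, h⟩⟩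

lemma hex_down : ∀ p q : ℕ, ∀ x y : ℤ, Odd (x + y) →
    ∃ w : hexGraph.Walk (x, y) (x + p - q, y - (p + q) - 1), w.length = 2 * (p + q) + 1 := by
  intro p
  induction p with
  | zero =>
    intro q
    induction q with
    | zero =>
      intro x y h
      refine ⟨((Walk.nil).cons (hex_adj_down x y h)).copy rfl
        (by simp only [Prod.mk.injEq]; push_cast; constructor <;> ring_nf), by simp⟩
    | succ q ih =>
      intro x y h
      obtain ⟨w, hw⟩ := ih (x - 1) (y - 1) (by rcases h with ⟨m, hm⟩; exact ⟨m - 1, by omega⟩)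
      refine ⟨((w.cons (hex_adj_left x (y-1))).cons (hex_adj_down x y h)).copy rfl
        (by simp only [Prod.mk.injEq]; push_cast; constructor <;> ring_nf), ?_⟩
      simp only [Walk.length_copy, Walk.length_cons, hw]; omega
  | succ p ih =>
    intro q x y h
    obtain ⟨w, hw⟩ := ih q (x + 1) (y - 1) (by rcases h with ⟨m, hm⟩; exact ⟨m, by omega⟩)
    refine ⟨((w.cons (hex_adj_right x (y-1))).cons (hex_adj_down x y h)).copy rfl
      (by simp only [Prod.mk.injEq]; push_cast; constructor <;> ring_nf), ?_⟩
    simp only [Walk.length_copy, Walk.length_cons, hw]; omega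

lemma hex_up : ∀ n p q : ℕ, p + q = n + 1 → ∀ x y : ℤ, Odd (x + y) →
    ∃ w : hexGraph.Walk (x, y) (x + p - q, y + n), w.length = 2 * n + 1 := by
  intro n
  induction n with
  | zero =>
    intro p q hpq x y h
    rcases Nat.eq_zero_or_pos p with hp | hp
    · obtain rfl : q = 1 := by omega
      subst hp
      refine ⟨((Walk.nil).cons (hex_adj_left x y)).copy rfl
        (by simp only [Prod.mk.injEq]; push_cast; constructor <;> ring_nf), by simp⟩
    · obtain rfl : p = 1 := by omega
      obtain rfl : q = 0 := by omega
      refine ⟨((Walk.nil).cons (hex_adj_right x y)).copy rfl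
        (by simp only [Prod.mk.injEq]; push_cast; constructor <;> ring_nf), by simp⟩
  | succ n ih =>
    intro p q hpq x y h
    rcases Nat.eq_zero_or_pos p with hp | hp
    · subst hp
      obtain ⟨q', rfl⟩ : ∃ q', q = q' + 1 := ⟨q - 1, by omega⟩
      obtain ⟨w, hw⟩ := ih 0 q' (by omega) (x - 1) (y + 1)
        (by rcases h with ⟨m, hm⟩; exact ⟨m, by omega⟩)
      have he : Even ((x - 1) + y) := by rcases h with ⟨m, hm⟩; exact ⟨m, by omega⟩
      refine ⟨((w.cons (hex_adj_up (x-1) y he)).cons (hex_adj_left x y)).copy rfl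
        (by simp only [Prod.mk.injEq]; push_cast; constructor <;> ring_nf), ?_⟩
      simp only [Walk.length_copy, Walk.length_cons, hw]; omega
    · obtain ⟨p', rfl⟩ : ∃ p', p = p' + 1 := ⟨p - 1, by omega⟩
      obtain ⟨w, hw⟩ := ih p' q (by omega) (x + 1) (y + 1)
        (by rcases h with ⟨m, hm⟩; exact ⟨m + 1, by omega⟩)
      have he : Even ((x + 1) + y) := by rcases h with ⟨m, hm⟩; exact ⟨m + 1, by omega⟩
      refine ⟨((w.cons (hex_adj_up (x+1) y he)).cons (hex_adj_right x y)).copy rfl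
        (by simp only [Prod.mk.injEq]; push_cast; constructor <;> ring_nf), ?_⟩
      simp only [Walk.length_copy, Walk.length_cons, hw]; omega

/-- for x+y odd, paths of length exactly 2k+1 from (x,y) to
(x−k+2j, y−k−1) for 0 ≤ j ≤ k, and to (x−k−1+2j, y+k) for 0 ≤ j ≤ k+1. -/
theorem hex_odd_paths_odd_vertex (k : ℕ) (hk : 0 < k) (x y : ℤ) (hxy : Odd (x + y)) :
    (∀ j : ℕ, j ≤ k →
      ∃ p : hexGraph.Walk (x, y) (x - k + 2 * j, y - k - 1), p.length = 2 * k + 1) ∧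
    (∀ j : ℕ, j ≤ k + 1 →
      ∃ p : hexGraph.Walk (x, y) (x - k - 1 + 2 * j, y + k), p.length = 2 * k + 1) := by
  constructor
  · intro j hj
    obtain ⟨w, hw⟩ := hex_down j (k - j) x y hxy
    refine ⟨w.copy rfl (by simp only [Prod.mk.injEq]; push_cast; omega), ?_⟩
    simp only [Walk.length_copy, hw]; omega
  · intro j hj
    obtain ⟨w, hw⟩ := hex_up k j (k + 1 - j) (by omega) x y hxy
    refine ⟨w.copy rfl (by simp only [Prod.mk.injEq, and_true]; omega), ?_⟩
    simp only [Walk.length_copy, hw]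
end

section
/- Let r be a positive integer, (x,y) a vertex of the hexagonal grid, and k an integer with d((x,y), L_k) < r. Then every vertex (x−(r−|y−k|)+j, k) for j = 0, 1, …, 2(r−|y−k|) lies in the ball B_r((x,y)) of radius r around (x,y). -/
lemma hex_adj_h (a b a' : ℤ) (h : a = a' + 1 ∨ a' = a + 1) :
    hexGraph.Adj (a, b) (a', b) := Or.inl ⟨rfl, h⟩

lemma hex_adj_v (a b b' : ℤ) (h : (b' = b + 1 ∧ Even (a + b)) ∨ (b = b' + 1 ∧ Even (a + b'))) :
    hexGraph.Adj (a, b) (a, b') := Or.inr ⟨rfl, h⟩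

/-- A single diagonal move (any of the four directions) in two steps. -/
lemma hex_walk_diag1 (a b ε δ : ℤ) (hε : ε = 1 ∨ ε = -1) (hδ : δ = 1 ∨ δ = -1) :
    ∃ p : hexGraph.Walk (a, b) (a + ε, b + δ), p.length = 2 := by
  have hpar : ∀ c d : ℤ, Even (c + d) ↔ (c + d) % 2 = 0 := fun c d => Int.even_iff
  by_cases hp : Even (a + b) <;> rw [hpar] at hp
  · rcases hδ with rfl | rfl
    · exact ⟨(SimpleGraph.Walk.cons (hex_adj_v a b (b+1) (Or.inl ⟨rfl, (hpar a b).mpr hp⟩))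
        (SimpleGraph.Walk.cons (hex_adj_h a (b+1) (a+ε) (by omega)) SimpleGraph.Walk.nil)), by simp⟩
    · exact ⟨(SimpleGraph.Walk.cons (hex_adj_h a b (a+ε) (by omega))
        (SimpleGraph.Walk.cons (hex_adj_v (a+ε) b (b + (-1))
          (Or.inr ⟨by ring, (hpar _ _).mpr (by omega)⟩)) SimpleGraph.Walk.nil)), by simp⟩
  · rcases hδ with rfl | rfl
    · exact ⟨(SimpleGraph.Walk.cons (hex_adj_h a b (a+ε) (by omega))
        (SimpleGraph.Walk.cons (hex_adj_v (a+ε) b (b+1)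
          (Or.inl ⟨rfl, (hpar _ _).mpr (by omega)⟩)) SimpleGraph.Walk.nil)), by simp⟩
    · exact ⟨(SimpleGraph.Walk.cons (hex_adj_v a b (b + (-1))
          (Or.inr ⟨by ring, (hpar _ _).mpr (by omega)⟩))
        (SimpleGraph.Walk.cons (hex_adj_h a (b + (-1)) (a+ε) (by omega)) SimpleGraph.Walk.nil)), by simp⟩

/-- Horizontal walk of length |t|. -/
lemma hex_walk_horiz (n : ℕ) : ∀ (a b t : ℤ), t.natAbs = n →
    ∃ p : hexGraph.Walk (a, b) (a + t, b), p.length = n := by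
  induction n with
  | zero =>
    intro a b t ht
    have h0 : t = 0 := by omega
    subst h0
    exact ⟨SimpleGraph.Walk.nil.copy rfl (by norm_num), by simp⟩
  | succ n ih =>
    intro a b t ht
    have hε : ∃ ε : ℤ, (ε = 1 ∨ ε = -1) ∧ (t - ε).natAbs = n := by
      rcases le_or_gt t 0 with h' | h'
      · exact ⟨-1, Or.inr rfl, by omega⟩
      · exact ⟨1, Or.inl rfl, by omega⟩
    obtain ⟨ε, hε1, hε2⟩ := hε
    obtain ⟨p, hp⟩ := ih (a + ε) b (t - ε) hε2
    refine ⟨(SimpleGraph.Walk.cons (hex_adj_h a b (a + ε) (by omega)) p).copy rfl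
      (by congr 1; ring), by simp [hp]⟩

/-- Walk of n diagonal moves: vertical displacement exactly n (towards k),
net horizontal displacement t with |t| ≤ n, t ≡ n (mod 2); length 2n. -/
lemma hex_walk_diag (n : ℕ) : ∀ (a b k t : ℤ), (k - b).natAbs = n → t.natAbs ≤ n →
    ((n : ℤ) - t) % 2 = 0 → ∃ p : hexGraph.Walk (a, b) (a + t, k), p.length = 2 * n := by
  induction n with
  | zero =>
    intro a b k t h1 h2 _
    have hk : k = b := by omega
    have h0 : t = 0 := by omega
    subst hk; subst h0
    exact ⟨SimpleGraph.Walk.nil.copy rfl (by norm_num), by simp⟩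
  | succ n ih =>
    intro a b k t h1 h2 h3
    have hδ : ∃ δ : ℤ, (δ = 1 ∨ δ = -1) ∧ (k - (b + δ)).natAbs = n := by
      rcases le_or_gt k b with h' | h'
      · exact ⟨-1, Or.inr rfl, by omega⟩
      · exact ⟨1, Or.inl rfl, by omega⟩
    obtain ⟨δ, hδ1, hδ2⟩ := hδ
    have hε : ∃ ε : ℤ, (ε = 1 ∨ ε = -1) ∧ (t - ε).natAbs ≤ n ∧ ((n : ℤ) - (t - ε)) % 2 = 0 := by
      rcases le_or_gt t 0 with h' | h'
      · refine ⟨-1, Or.inr rfl, by push_cast at h3 ⊢; omega, by push_cast at h3 ⊢; omega⟩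
      · refine ⟨1, Or.inl rfl, by push_cast at h3 ⊢; omega, by push_cast at h3 ⊢; omega⟩
    obtain ⟨ε, hε1, hε2, hε3⟩ := hε
    obtain ⟨q, hq⟩ := hex_walk_diag1 a b ε δ hε1 hδ1
    obtain ⟨p, hp⟩ := ih (a + ε) (b + δ) k (t - ε) hδ2 hε2 hε3
    refine ⟨(q.append p).copy rfl (by congr 1; ring), ?_⟩
    simp [SimpleGraph.Walk.length_append, hq, hp]; ring

/-- Everything is reachable. -/
lemma hex_reach (a b x' k : ℤ) : hexGraph.Reachable (a, b) (x', k) := by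
  obtain ⟨q, _⟩ := hex_walk_diag ((k - b).natAbs) a b k ((k - b).natAbs) rfl le_rfl (by omega)
  obtain ⟨p, _⟩ := hex_walk_horiz ((x' - (a + ((k - b).natAbs))).natAbs)
    (a + ((k - b).natAbs)) k (x' - (a + ((k - b).natAbs))) rfl
  exact ⟨(q.append p).copy rfl (by congr 1; ring)⟩

/-- 1-Lipschitz potential for lower bounds. -/
def hexPot (u : ℤ × ℤ) : ℤ := 2 * u.2 + (if Even (u.1 + u.2) then 1 else 0)

lemma hexPot_adj : ∀ u v : ℤ × ℤ, hexGraph.Adj u v → |hexPot v - hexPot u| ≤ 1 := by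
  rintro ⟨a, b⟩ ⟨a', b'⟩ h
  have h' : ((b = b') ∧ (a = a' + 1 ∨ a' = a + 1)) ∨
      (a = a' ∧ ((b' = b + 1 ∧ (a + b) % 2 = 0) ∨ (b = b' + 1 ∧ (a' + b') % 2 = 0))) := by
    rcases h with ⟨h1, h2⟩ | ⟨h1, ⟨h2, h3⟩ | ⟨h2, h3⟩⟩
    · exact Or.inl ⟨h1, h2⟩
    · exact Or.inr ⟨h1, Or.inl ⟨h2, Int.even_iff.mp h3⟩⟩
    · exact Or.inr ⟨h1, Or.inr ⟨h2, Int.even_iff.mp h3⟩⟩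
  simp only [hexPot]
  split_ifs with p1 p2 p2 <;> rw [Int.even_iff] at p1 p2 <;> rw [abs_le] <;> omega

lemma hexPot_walk {u v : ℤ × ℤ} (p : hexGraph.Walk u v) :
    |hexPot v - hexPot u| ≤ (p.length : ℤ) := by
  induction p with
  | nil => simp
  | @cons a c w h q ih =>
    have h1 := hexPot_adj a c h
    have h2 := abs_sub_le (hexPot w) (hexPot c) (hexPot a)
    rw [SimpleGraph.Walk.length_cons]
    push_cast
    omega

/-- if d((x,y), L_k) < r then the 2(r−|y−k|)+1 consecutive vertices
of L_k centered below/above (x,y) all lie in the ball B_r((x,y)). -/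
theorem hex_vertex_ball_line (r : ℕ) (hr : 0 < r) (x y k : ℤ)
    (h : hexLineDist (x, y) k < r) :
    ∀ j : ℤ, 0 ≤ j → j ≤ 2 * ((r : ℤ) - |y - k|) →
      (hexGraph.dist (x, y) (x - ((r : ℤ) - |y - k|) + j, k) : ℤ) ≤ r := by
  intro j hj0 hj2
  set n : ℕ := (k - y).natAbs with hn
  have hnΔ : (n : ℤ) = |y - k| := by
    rw [hn]
    rcases abs_cases (y - k) with ⟨h1, h2⟩ | ⟨h1, h2⟩ <;> omega
  rw [← hnΔ] at hj2 ⊢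
  -- extract a realizing vertex for the line distance
  have hne : {m : ℕ | ∃ x0 : ℤ, hexGraph.dist (x, y) (x0, k) = m}.Nonempty :=
    ⟨hexGraph.dist (x, y) (x, k), x, rfl⟩
  obtain ⟨x0, hx0⟩ := Nat.sInf_mem hne
  unfold hexLineDist at h
  rw [← hx0] at h
  -- lower bound on that distance
  obtain ⟨p0, hp0⟩ := (hex_reach x y x0 k).exists_walk_length_eq_dist
  have hlip := hexPot_walk p0
  rw [hp0] at hlip
  simp only [hexPot] at hlip
  have habs := abs_le.mp hlip
  rw [sub_le_iff_le_add, neg_le, neg_sub] at habs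
  have hd : (hexGraph.dist (x, y) (x0, k) : ℤ) < r := by exact_mod_cast h
  have fact1 : 2 * (n : ℤ) ≤ r := by
    by_cases hp1 : Even (x + y) <;> by_cases hp2 : Even (x0 + k) <;>
      simp only [if_pos, if_neg, hp1, hp2, ite_true, ite_false] at habs <;> omega
  have fact2 : ((y < k ∧ ¬ Even (x + y)) ∨ (k < y ∧ Even (x + y))) → 2 * (n : ℤ) + 1 ≤ r := by
    intro hw
    rcases hw with ⟨hlt, hpar⟩ | ⟨hlt, hpar⟩ <;>
      by_cases hp2 : Even (x0 + k) <;>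
      simp only [if_pos, if_neg, hpar, hp2, ite_true, ite_false, not_true, not_false_iff] at habs <;>
      omega
  -- setup target
  set t : ℤ := j - ((r : ℤ) - (n : ℤ)) with htdef
  have hgoal_eq : x - ((r : ℤ) - (n : ℤ)) + j = x + t := by rw [htdef]; ring
  rw [hgoal_eq]
  have htabs : t.natAbs ≤ r - n := by omega
  -- case analysis
  have hnr : n ≤ r := by omega
  rcases le_or_gt n t.natAbs with hcase | hcase
  · -- |t| ≥ n : diagonals then horizontal
    have hs : ∃ s : ℤ, s.natAbs = n ∧ ((n:ℤ) - s) % 2 = 0 ∧ (t - s).natAbs = t.natAbs - n := by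
      rcases le_or_gt 0 t with h' | h'
      · exact ⟨(n : ℤ), by omega, by omega, by omega⟩
      · exact ⟨-(n : ℤ), by omega, by omega, by omega⟩
    obtain ⟨s, hs1, hs2, hs3⟩ := hs
    obtain ⟨q, hq⟩ := hex_walk_diag n x y k s (by omega) (by omega) hs2
    obtain ⟨p, hp⟩ := hex_walk_horiz (t.natAbs - n) (x + s) k (t - s) hs3
    have hcpy : ((x + s + (t - s), k) : ℤ × ℤ) = ((x + t, k) : ℤ × ℤ) := by
      have hxx : x + s + (t - s) = x + t := by ring
      rw [hxx]
    have hdle := hexGraph.dist_le ((q.append p).copy rfl hcpy)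
    rw [SimpleGraph.Walk.length_copy, SimpleGraph.Walk.length_append, hq, hp] at hdle
    have : (hexGraph.dist (x, y) (x + t, k) : ℤ) ≤ 2 * n + (t.natAbs - n : ℕ) := by
      exact_mod_cast hdle
    omega
  · rcases em (((n:ℤ) - t) % 2 = 0) with hpar | hpar
    · -- parity matches: pure diagonals, length 2n
      obtain ⟨q, hq⟩ := hex_walk_diag n x y k t rfl (by omega) hpar
      have hdle := hexGraph.dist_le q
      rw [hq] at hdle
      have : (hexGraph.dist (x, y) (x + t, k) : ℤ) ≤ 2 * n := by exact_mod_cast hdle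
      omega
    · -- parity mismatch: need a lone vertical move
      have hn1 : 1 ≤ n := by omega
      have hδ : ∃ δ : ℤ, (δ = 1 ∨ δ = -1) ∧ (k - (y + δ)).natAbs = n - 1 := by
        rcases le_or_gt k y with h' | h'
        · exact ⟨-1, Or.inr rfl, by omega⟩
        · exact ⟨1, Or.inl rfl, by omega⟩
      obtain ⟨δ, hδ1, hδ2⟩ := hδ
      have hyk : y ≠ k := by omega
      by_cases hgood : (y < k ∧ Even (x + y)) ∨ (k < y ∧ ¬ Even (x + y))
      · -- correct parity: vertical first then n-1 diagonals, length 2n-1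
        have hadj : hexGraph.Adj (x, y) (x, y + δ) := by
          apply hex_adj_v
          rcases hgood with ⟨hlt, hp⟩ | ⟨hlt, hp⟩
          · have : δ = 1 := by rcases hδ1 with rfl | rfl <;> omega
            exact Or.inl ⟨by rw [this], hp⟩
          · have hd1 : δ = -1 := by rcases hδ1 with rfl | rfl <;> omega
            refine Or.inr ⟨by rw [hd1]; ring, ?_⟩
            have : x + (y + δ) = (x + y) - 1 := by rw [hd1]; ring
            rw [this]
            exact (Int.even_sub_one).mpr hp
        obtain ⟨q, hq⟩ := hex_walk_diag (n - 1) x (y + δ) k t hδ2 (by omega) (by omega)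
        have hdle := hexGraph.dist_le (SimpleGraph.Walk.cons hadj q)
        rw [SimpleGraph.Walk.length_cons, hq] at hdle
        have : (hexGraph.dist (x, y) (x + t, k) : ℤ) ≤ 2 * (n - 1 : ℕ) + 1 := by exact_mod_cast hdle
        push_cast at this
        omega
      · -- wrong parity
        have hbad : (y < k ∧ ¬ Even (x + y)) ∨ (k < y ∧ Even (x + y)) := by
          by_cases hp : Even (x + y)
          · right
            refine ⟨?_, hp⟩
            rcases lt_or_gt_of_ne hyk with h' | h'
            · exact absurd (Or.inl ⟨h', hp⟩) hgood
            · exact h'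
          · left
            refine ⟨?_, hp⟩
            rcases lt_or_gt_of_ne hyk with h' | h'
            · exact h'
            · exact absurd (Or.inr ⟨h', hp⟩) hgood
        have hr2 := fact2 hbad
        have hadj1 : hexGraph.Adj (x, y) (x + 1, y) := hex_adj_h x y (x + 1) (Or.inr rfl)
        have hadj2 : hexGraph.Adj (x + 1, y) (x + 1, y + δ) := by
          apply hex_adj_v
          rcases hbad with ⟨hlt, hp⟩ | ⟨hlt, hp⟩
          · have hd1 : δ = 1 := by rcases hδ1 with rfl | rfl <;> omega
            refine Or.inl ⟨by rw [hd1], ?_⟩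
            have : x + 1 + y = (x + y) + 1 := by ring
            rw [this]
            exact Int.even_add_one.mpr hp
          · have hd1 : δ = -1 := by rcases hδ1 with rfl | rfl <;> omega
            refine Or.inr ⟨by rw [hd1]; ring, ?_⟩
            have : x + 1 + (y + δ) = (x + y) := by rw [hd1]; ring
            rw [this]
            exact hp
        obtain ⟨q, hq⟩ := hex_walk_diag (n - 1) (x + 1) (y + δ) k t hδ2 (by omega) (by omega)
        have hadj3 : hexGraph.Adj (x + 1 + t, k) (x + t, k) :=
          hex_adj_h (x + 1 + t) k (x + t) (Or.inl (by ring))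
        have hdle := hexGraph.dist_le (SimpleGraph.Walk.cons hadj1 (SimpleGraph.Walk.cons hadj2
          (q.append (SimpleGraph.Walk.cons hadj3 SimpleGraph.Walk.nil))))
        simp only [SimpleGraph.Walk.length_cons, SimpleGraph.Walk.length_append,
          SimpleGraph.Walk.length_nil, hq] at hdle
        have : (hexGraph.dist (x, y) (x + t, k) : ℤ) ≤ 2 * (n - 1 : ℕ) + 0 + 1 + 1 + 1 := by
          exact_mod_cast hdle
        push_cast at this
        omega
end
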